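/- Suppose λ ∈ ℝ^m satisfies the Diophantine condition |n·λ| ≥ c₀ |n|^{−τ} for all n ∈ ℤ^m \ {0}, where c₀ > 0 and τ > 0. Let f(t) = e^{2πi(n·λ)t} for a fixed n ∈ ℤ^m \ {0}, let R, ℓ be positive integers with N = 2Rℓ, and let I_n = (1/N) Σ_{j=−R}^{R−1} Σ_{k=0}^{ℓ−1} f(j + k/ℓ). Then |I_n| ≤ C ( ℓ^{−1} |n| + R^{−1} |n|^τ ), where C depends only on |λ|, c₀ and τ. -/

import Mathlib

lemma aux_norm_exp_mul_I_sub_one_ge {x : ℝ} (hx : |x| ≤ Real.pi) :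
    2 * |x| / Real.pi ≤ ‖Complex.exp (x * Complex.I) - 1‖ := by
  have hπ := Real.pi_pos
  have hsq : ‖Complex.exp (x * Complex.I) - 1‖ ^ 2 = 2 - 2 * Real.cos x := by
    rw [Complex.sq_norm, Complex.normSq_apply]
    simp only [Complex.sub_re, Complex.sub_im, Complex.exp_ofReal_mul_I_re,
      Complex.exp_ofReal_mul_I_im, Complex.one_re, Complex.one_im]
    nlinarith [Real.sin_sq_add_cos_sq x]
  have hhalf : 2 - 2 * Real.cos x = 4 * Real.sin (x / 2) ^ 2 := by
    have h1 := Real.cos_two_mul (x / 2)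
    rw [show 2 * (x / 2) = x by ring] at h1
    nlinarith [Real.sin_sq_add_cos_sq (x / 2)]
  have hs : |x| / Real.pi ≤ |Real.sin (x / 2)| := by
    have habs : Real.sin (|x| / 2) ≤ |Real.sin (x / 2)| := by
      rcases le_or_gt 0 x with h | h
      · rw [abs_of_nonneg h]
        exact le_abs_self _
      · rw [abs_of_neg h, neg_div, Real.sin_neg]
        exact neg_le_abs _
    have hj : 2 / Real.pi * (|x| / 2) ≤ Real.sin (|x| / 2) :=
      Real.mul_le_sin (by positivity) (by linarith [abs_nonneg x])
    calc |x| / Real.pi = 2 / Real.pi * (|x| / 2) := by field_simp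
      _ ≤ Real.sin (|x| / 2) := hj
      _ ≤ |Real.sin (x / 2)| := habs
  have hA : 0 ≤ ‖Complex.exp (x * Complex.I) - 1‖ := norm_nonneg _
  have h4 : ‖Complex.exp (x * Complex.I) - 1‖ ^ 2 = 4 * Real.sin (x / 2) ^ 2 := by
    rw [hsq, hhalf]
  have h5 : (|x| / Real.pi) ^ 2 ≤ Real.sin (x / 2) ^ 2 := by
    rw [← _root_.sq_abs (Real.sin (x / 2))]
    exact pow_le_pow_left₀ (by positivity) hs 2
  rw [div_le_iff₀ hπ]
  have h5' : |x| ^ 2 ≤ Real.sin (x / 2) ^ 2 * Real.pi ^ 2 := by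
    rw [div_pow, div_le_iff₀ (by positivity)] at h5
    exact h5
  nlinarith [hA, h4, h5', hπ, mul_nonneg hA hπ.le, abs_nonneg x]

set_option maxHeartbeats 2000000 in
theorem exponential_sum_bound (m : ℕ) (lam : Fin m → ℝ) (c₀ τ : ℝ)
    (hc₀ : 0 < c₀) (hτ : 0 < τ)
    (hdio : ∀ n : Fin m → ℤ, n ≠ 0 →
      c₀ * Real.sqrt (∑ i, ((n i : ℝ)) ^ 2) ^ (-τ) ≤ |∑ i, (n i : ℝ) * lam i|) :
    ∃ C : ℝ, 0 < C ∧ ∀ (n : Fin m → ℤ), n ≠ 0 → ∀ (R ℓ : ℕ), 0 < R → 0 < ℓ →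
      ‖(((2 * R * ℓ : ℕ) : ℝ))⁻¹ •
          ∑ j ∈ Finset.Icc (-(R : ℤ)) ((R : ℤ) - 1), ∑ k ∈ Finset.range ℓ,
            Complex.exp (2 * (Real.pi : ℂ) * Complex.I *
              ((∑ i, (n i : ℝ) * lam i : ℝ) : ℂ) *
              (((j : ℝ) + (k : ℝ) / (ℓ : ℝ) : ℝ) : ℂ))‖
        ≤ C * ((ℓ : ℝ)⁻¹ * Real.sqrt (∑ i, ((n i : ℝ)) ^ 2)
            + (R : ℝ)⁻¹ * Real.sqrt (∑ i, ((n i : ℝ)) ^ 2) ^ τ) := by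
  classical
  refine ⟨2 * Real.sqrt (∑ i, (lam i) ^ 2) + 1 / (4 * c₀) + 1, by positivity, ?_⟩
  intro n hn R ℓ hR hℓ
  set L : ℝ := Real.sqrt (∑ i, (lam i) ^ 2) with hLdef
  have hLnn : 0 ≤ L := Real.sqrt_nonneg _
  set nn : ℝ := Real.sqrt (∑ i, ((n i : ℝ)) ^ 2) with hnndef
  set α : ℝ := ∑ i, (n i : ℝ) * lam i with hαdef
  have hRpos : (0:ℝ) < R := by exact_mod_cast hR
  have hℓpos : (0:ℝ) < ℓ := by exact_mod_cast hℓ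
  have hnn_pos : 0 < nn := by
    obtain ⟨i, hi⟩ := Function.ne_iff.mp hn
    have h1 : (1:ℝ) ≤ ((n i : ℝ)) ^ 2 := by
      have hne : n i ≠ 0 := by simpa using hi
      have : (1:ℤ) ≤ (n i) ^ 2 := by
        rcases lt_or_gt_of_ne hne with h | h <;> nlinarith
      exact_mod_cast this
    have hsum : (1:ℝ) ≤ ∑ i, ((n i : ℝ)) ^ 2 :=
      le_trans h1 (Finset.single_le_sum (f := fun i => ((n i : ℝ)) ^ 2) (fun j _ => sq_nonneg _) (Finset.mem_univ i))
    rw [hnndef]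
    exact Real.sqrt_pos.mpr (by linarith)
  have hdi := hdio n hn
  rw [← hnndef, ← hαdef] at hdi
  have hα_pos : 0 < |α| :=
    lt_of_lt_of_le (mul_pos hc₀ (Real.rpow_pos_of_pos hnn_pos _)) hdi
  have hα_ne : α ≠ 0 := abs_pos.mp hα_pos
  have hnnτ_pos : 0 < nn ^ τ := Real.rpow_pos_of_pos hnn_pos τ
  have hα_le : |α| ≤ nn * L := by
    have hcs := Finset.sum_mul_sq_le_sq_mul_sq Finset.univ (fun i => (n i : ℝ)) lam
    rw [show |α| = Real.sqrt (α ^ 2) from (Real.sqrt_sq_eq_abs α).symm,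
      hnndef, hLdef, ← Real.sqrt_mul (by positivity)]
    exact Real.sqrt_le_sqrt (by rw [hαdef]; exact hcs)
  have hinv : |α|⁻¹ ≤ nn ^ τ / c₀ := by
    rw [Real.rpow_neg hnn_pos.le, ← div_eq_mul_inv] at hdi
    rw [← inv_div]
    have hpos : 0 < c₀ / nn ^ τ := by positivity
    exact inv_anti₀ hpos hdi
  -- setup exponentials
  set θ : ℝ := 2 * Real.pi * α with hθdef
  set x : ℝ := θ / ℓ with hxdef
  set u₁ : ℂ := Complex.exp (x * Complex.I) with hu₁def
  set u : ℂ := u₁ ^ ℓ with hudef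
  have hℓC : (ℓ : ℂ) ≠ 0 := Nat.cast_ne_zero.mpr hℓ.ne'
  have hu_exp : u = Complex.exp (θ * Complex.I) := by
    rw [hudef, hu₁def, ← Complex.exp_nat_mul]
    congr 1
    rw [hxdef]
    push_cast
    field_simp
  have key : ∀ j : ℤ, ∀ k : ℕ,
      Complex.exp (2 * (Real.pi : ℂ) * Complex.I * ((α : ℝ) : ℂ) *
        (((j : ℝ) + (k : ℝ) / (ℓ : ℝ) : ℝ) : ℂ)) = u ^ j * u₁ ^ k := by
    intro j k
    rw [hu_exp, ← Complex.exp_int_mul, hu₁def, ← Complex.exp_nat_mul, ← Complex.exp_add]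
    congr 1
    rw [hxdef, hθdef]
    push_cast
    field_simp
  have hS : ∑ j ∈ Finset.Icc (-(R : ℤ)) ((R : ℤ) - 1), ∑ k ∈ Finset.range ℓ,
      Complex.exp (2 * (Real.pi : ℂ) * Complex.I * ((α : ℝ) : ℂ) *
        (((j : ℝ) + (k : ℝ) / (ℓ : ℝ) : ℝ) : ℂ))
      = (∑ j ∈ Finset.Icc (-(R : ℤ)) ((R : ℤ) - 1), u ^ j) *
        (∑ k ∈ Finset.range ℓ, u₁ ^ k) := by
    rw [Finset.sum_mul_sum]
    exact Finset.sum_congr rfl fun j _ => Finset.sum_congr rfl fun k _ => key j k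
  have hu₁_abs : ‖u₁‖ = 1 := by rw [hu₁def]; exact Complex.norm_exp_ofReal_mul_I x
  have hu_abs : ‖u‖ = 1 := by rw [hudef, norm_pow, hu₁_abs, one_pow]
  have hu_ne : u ≠ 0 := by
    intro h; rw [h] at hu_abs; simp at hu_abs
  have hNpos : (0:ℝ) < ((2 * R * ℓ : ℕ) : ℝ) := by positivity
  clear_value L nn α θ x u₁ u
  rw [hS, norm_smul, Real.norm_eq_abs, abs_of_pos (inv_pos.mpr hNpos)]
  have hRHS1 : 0 ≤ (ℓ : ℝ)⁻¹ * nn := mul_nonneg (by positivity) hnn_pos.le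
  have hRHS2 : 0 ≤ (R : ℝ)⁻¹ * nn ^ τ := mul_nonneg (by positivity) hnnτ_pos.le
  rcases le_or_gt ((ℓ:ℝ) / 2) |α| with hcase | hcase
  · -- trivial bound
    have htriv : (((2 * R * ℓ : ℕ) : ℝ))⁻¹ *
        ‖(∑ j ∈ Finset.Icc (-(R : ℤ)) ((R : ℤ) - 1), u ^ j) *
          (∑ k ∈ Finset.range ℓ, u₁ ^ k)‖ ≤ 1 := by
      rw [inv_mul_le_iff₀ hNpos, mul_one, norm_mul]
      have hcard : (Finset.Icc (-(R : ℤ)) ((R : ℤ) - 1)).card = 2 * R := by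
        rw [Int.card_Icc]; omega
      have h1 : ‖∑ j ∈ Finset.Icc (-(R : ℤ)) ((R : ℤ) - 1), u ^ j‖
          ≤ 2 * (R:ℝ) := by
        calc ‖∑ j ∈ Finset.Icc (-(R : ℤ)) ((R : ℤ) - 1), u ^ j‖
            ≤ ∑ j ∈ Finset.Icc (-(R : ℤ)) ((R : ℤ) - 1), ‖u ^ j‖ :=
              norm_sum_le _ _
          _ = ∑ j ∈ Finset.Icc (-(R : ℤ)) ((R : ℤ) - 1), 1 := by
              refine Finset.sum_congr rfl fun j _ => ?_
              rw [norm_zpow, hu_abs, one_zpow]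
          _ = ((Finset.Icc (-(R : ℤ)) ((R : ℤ) - 1)).card : ℝ) := by simp
          _ = 2 * (R:ℝ) := by rw [hcard]; push_cast; ring
      have h2 : ‖∑ k ∈ Finset.range ℓ, u₁ ^ k‖ ≤ (ℓ:ℝ) := by
        calc ‖∑ k ∈ Finset.range ℓ, u₁ ^ k‖
            ≤ ∑ k ∈ Finset.range ℓ, ‖u₁ ^ k‖ :=
              norm_sum_le _ _
          _ = ∑ k ∈ Finset.range ℓ, 1 := by
              refine Finset.sum_congr rfl fun k _ => ?_
              rw [norm_pow, hu₁_abs, one_pow]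
          _ = (ℓ:ℝ) := by simp
      calc ‖∑ j ∈ Finset.Icc (-(R : ℤ)) ((R : ℤ) - 1), u ^ j‖ *
            ‖∑ k ∈ Finset.range ℓ, u₁ ^ k‖
          ≤ (2 * (R:ℝ)) * (ℓ:ℝ) :=
            mul_le_mul h1 h2 (norm_nonneg _) (by positivity)
        _ = ((2 * R * ℓ : ℕ) : ℝ) := by push_cast; ring
    have hone : (1:ℝ) ≤ 2 * L * ((ℓ:ℝ)⁻¹ * nn) := by
      have h1 : (ℓ:ℝ) / 2 ≤ nn * L := le_trans hcase hα_le
      have h2 : (ℓ:ℝ) ≤ 2 * L * nn := by linarith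
      rw [show 2 * L * ((ℓ:ℝ)⁻¹ * nn) = (2 * L * nn) / (ℓ:ℝ) by ring,
        le_div_iff₀ hℓpos, one_mul]
      exact h2
    calc (((2 * R * ℓ : ℕ) : ℝ))⁻¹ *
          ‖(∑ j ∈ Finset.Icc (-(R : ℤ)) ((R : ℤ) - 1), u ^ j) *
            (∑ k ∈ Finset.range ℓ, u₁ ^ k)‖ ≤ 1 := htriv
      _ ≤ 2 * L * ((ℓ:ℝ)⁻¹ * nn) := hone
      _ ≤ (2 * L + 1 / (4 * c₀) + 1) * ((ℓ:ℝ)⁻¹ * nn + (R:ℝ)⁻¹ * nn ^ τ) := by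
          have hC : (0:ℝ) < 1 / (4 * c₀) + 1 := by positivity
          nlinarith [mul_nonneg hC.le hRHS1,
            mul_nonneg (by positivity : (0:ℝ) ≤ 2 * L + 1 / (4 * c₀) + 1) hRHS2]
  · -- main case: |α| < ℓ/2
    have hπ := Real.pi_pos
    have habs2π : |2 * Real.pi * α| = 2 * Real.pi * |α| := by
      rw [abs_mul, abs_of_pos (by positivity : (0:ℝ) < 2 * Real.pi)]
    have hx_abs : |x| < Real.pi := by
      rw [hxdef, hθdef, abs_div, abs_of_pos hℓpos, div_lt_iff₀ hℓpos, habs2π]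
      nlinarith [mul_lt_mul_of_pos_left hcase (by positivity : (0:ℝ) < 2 * Real.pi)]
    have hu₁_lb : 4 * |α| / (ℓ:ℝ) ≤ ‖u₁ - 1‖ := by
      have haux := aux_norm_exp_mul_I_sub_one_ge (x := x) hx_abs.le
      rw [← hu₁def] at haux
      refine le_trans (le_of_eq ?_) haux
      rw [hxdef, hθdef, abs_div, abs_of_pos hℓpos, habs2π]
      field_simp
      ring
    have hlb_pos : (0:ℝ) < 4 * |α| / (ℓ:ℝ) := div_pos (by linarith) hℓpos
    have habs_pos : 0 < ‖u₁ - 1‖ := lt_of_lt_of_le hlb_pos hu₁_lb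
    have hu₁_ne1 : u₁ ≠ 1 := by
      intro h
      rw [h, sub_self] at habs_pos
      simp at habs_pos
    have hB : (∑ k ∈ Finset.range ℓ, u₁ ^ k) = (u - 1) / (u₁ - 1) := by
      rw [geom_sum_eq hu₁_ne1, hudef]
    have hprod : ‖(∑ j ∈ Finset.Icc (-(R : ℤ)) ((R : ℤ) - 1), u ^ j) *
        (∑ k ∈ Finset.range ℓ, u₁ ^ k)‖ ≤ 2 / ‖u₁ - 1‖ := by
      rcases eq_or_ne u 1 with hu1 | hu1
      · rw [hB, hu1, sub_self, zero_div, mul_zero, norm_zero]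
        exact div_nonneg (by norm_num) (norm_nonneg _)
      · have hu1_ne : u - 1 ≠ 0 := sub_ne_zero.mpr hu1
        have hA : (∑ j ∈ Finset.Icc (-(R : ℤ)) ((R : ℤ) - 1), u ^ j)
            = u ^ (-(R:ℤ)) * ((u ^ (2 * R) - 1) / (u - 1)) := by
          have hmap : Finset.Icc (-(R : ℤ)) ((R : ℤ) - 1)
              = (Finset.range (2 * R)).map
                ⟨fun p : ℕ => (p : ℤ) - R, (show Function.Injective (fun p : ℕ => (p : ℤ) - R) by intro a b h; dsimp at h; omega)⟩ := by
            ext j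
            simp only [Finset.mem_Icc, Finset.mem_map, Finset.mem_range,
              Function.Embedding.coeFn_mk]
            constructor
            · intro hj
              refine ⟨(j + R).toNat, ?_, ?_⟩ <;> omega
            · rintro ⟨p, hp, rfl⟩
              omega
          rw [hmap, Finset.sum_map]
          simp only [Function.Embedding.coeFn_mk]
          have hterm : ∀ p : ℕ, u ^ ((p:ℤ) - (R:ℤ)) = u ^ (-(R:ℤ)) * u ^ p := by
            intro p
            rw [sub_eq_add_neg, zpow_add₀ hu_ne, zpow_natCast, mul_comm]
          rw [Finset.sum_congr rfl fun p _ => hterm p, ← Finset.mul_sum,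
            geom_sum_eq hu1 (2 * R)]
        have hABmul : (∑ j ∈ Finset.Icc (-(R : ℤ)) ((R : ℤ) - 1), u ^ j) *
            (∑ k ∈ Finset.range ℓ, u₁ ^ k)
            = u ^ (-(R:ℤ)) * ((u ^ (2 * R) - 1) / (u₁ - 1)) := by
          rw [hA, hB, mul_assoc, div_mul_div_cancel₀ hu1_ne]
        rw [hABmul, norm_mul, norm_zpow, hu_abs, one_zpow, one_mul, norm_div]
        have hnum : ‖u ^ (2 * R) - 1‖ ≤ 2 := by
          have h : ‖u ^ (2 * R) - (1:ℂ)‖ ≤ 2 := by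
            calc ‖u ^ (2 * R) - (1:ℂ)‖ ≤ ‖u ^ (2 * R)‖ + ‖(1:ℂ)‖ := norm_sub_le _ _
              _ = 2 := by rw [norm_pow, hu_abs]; norm_num
          exact h
        exact div_le_div_of_nonneg_right hnum habs_pos.le
    calc (((2 * R * ℓ : ℕ) : ℝ))⁻¹ *
          ‖(∑ j ∈ Finset.Icc (-(R : ℤ)) ((R : ℤ) - 1), u ^ j) *
            (∑ k ∈ Finset.range ℓ, u₁ ^ k)‖
        ≤ (((2 * R * ℓ : ℕ) : ℝ))⁻¹ * (2 / ‖u₁ - 1‖) :=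
          mul_le_mul_of_nonneg_left hprod (by positivity)
      _ ≤ (((2 * R * ℓ : ℕ) : ℝ))⁻¹ * (2 / (4 * |α| / (ℓ:ℝ))) := by
          apply mul_le_mul_of_nonneg_left _ (by positivity)
          exact div_le_div_of_nonneg_left (by norm_num) hlb_pos hu₁_lb
      _ = (1/4) * (R:ℝ)⁻¹ * |α|⁻¹ := by
          rw [show ((2 * R * ℓ : ℕ) : ℝ) = 2 * (R:ℝ) * (ℓ:ℝ) by push_cast; ring]
          field_simp [hℓpos.ne', hRpos.ne', hα_pos.ne']
      _ ≤ (1/4) * (R:ℝ)⁻¹ * (nn ^ τ / c₀) := by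
          apply mul_le_mul_of_nonneg_left hinv (by positivity)
      _ = 1 / (4 * c₀) * ((R:ℝ)⁻¹ * nn ^ τ) := by
          ring
      _ ≤ (2 * L + 1 / (4 * c₀) + 1) * ((ℓ:ℝ)⁻¹ * nn + (R:ℝ)⁻¹ * nn ^ τ) := by
          nlinarith [mul_nonneg (by positivity : (0:ℝ) ≤ 2 * L + 1) hRHS2,
            mul_nonneg (by positivity : (0:ℝ) ≤ 2 * L + 1 / (4 * c₀) + 1) hRHS1,
            mul_nonneg (le_of_lt (by positivity : (0:ℝ) < 1/(4*c₀))) hRHS2]
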